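/- For every integer r ≥ 0 and every integer k ≥ 2, the treewidth of the primal graph of the CNF F_{r,k} is at most 2k − 1. -/

import Mathlib

/-- The complete binary tree of height `r`, with nodes heap-indexed by
`Fin (2^(r+1) - 1)`: the children of node `i` are `2*i+1` and `2*i+2`. -/
def treeGraph (r : ℕ) : SimpleGraph (Fin (2 ^ (r + 1) - 1)) :=
  SimpleGraph.fromRel (fun i j => (j : ℕ) = 2 * (i : ℕ) + 1 ∨ (j : ℕ) = 2 * (i : ℕ) + 2)

/-- The graph `CT_{r,k}`: each node of the complete binary tree of height `r`
is replaced by a clique of `k` vertices, and for each tree edge all vertices of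
the two corresponding cliques are mutually adjacent. -/
def CT (r k : ℕ) : SimpleGraph (Fin (2 ^ (r + 1) - 1) × Fin k) :=
  SimpleGraph.fromRel (fun a b => a.1 = b.1 ∨ (treeGraph r).Adj a.1 b.1)

/-- The variables of the CNF `CNF(G)`: one variable `X_u` per vertex `u`
(left summand) and one variable `X_{u,v}` per edge `{u,v}` (right summand). -/
def CNFVar {V : Type} (G : SimpleGraph V) : Type := V ⊕ G.edgeSet

/-- The Boolean function represented by `CNF(G)`: an assignment `a` is
satisfying iff for every edge `{u,v}` of `G` the clause
`(X_u ∨ X_{u,v} ∨ X_v)` is satisfied. -/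
def cnfSat {V : Type} (G : SimpleGraph V) (a : CNFVar G → Bool) : Prop :=
  ∀ (e : G.edgeSet) (u v : V), e.1 = s(u, v) →
    a (Sum.inl u) = true ∨ a (Sum.inr e) = true ∨ a (Sum.inl v) = true

/-- The variable `x` occurs in the clause corresponding to the edge `e`. -/
def inClause {V : Type} (G : SimpleGraph V) (e : G.edgeSet) (x : CNFVar G) : Prop :=
  x = Sum.inr e ∨ ∃ u : V, x = Sum.inl u ∧ u ∈ e.1

/-- The primal graph of `CNF(G)`: vertices are the variables, two distinct
variables being adjacent iff they occur together in some clause. -/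
def primalGraph {V : Type} (G : SimpleGraph V) : SimpleGraph (CNFVar G) :=
  SimpleGraph.fromRel (fun x y => ∃ e, inClause G e x ∧ inClause G e y)

/-- `TreewidthLE G w` holds iff `G` admits a tree decomposition of width at
most `w`, i.e. a tree `T` with bags satisfying the union, containment and
connectedness conditions, all bags having at most `w + 1` vertices. -/
def TreewidthLE {V : Type} (G : SimpleGraph V) (w : ℕ) : Prop :=
  ∃ (ι : Type) (T : SimpleGraph ι) (bag : ι → Finset V),
    T.IsTree ∧
    (∀ v : V, ∃ t, v ∈ bag t) ∧
    (∀ u v : V, G.Adj u v → ∃ t, u ∈ bag t ∧ v ∈ bag t) ∧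
    (∀ v : V, (T.induce {t | v ∈ bag t}).Connected) ∧
    (∀ t, (bag t).card ≤ w + 1)

/-! ### Auxiliary definitions -/

/-- A generic lemma: a graph built from a parent function with a strictly
decreasing rank towards a unique root is a tree. -/
lemma parent_isTree {ι : Type} (P : ι → ι) (h : ι → ℕ) (r₀ : ι)
    (H1 : ∀ t, t ≠ r₀ → h (P t) < h t) (H2 : P r₀ = r₀) :
    (SimpleGraph.fromRel (fun s t => P t = s)).IsTree := by
  set G := SimpleGraph.fromRel (fun s t => P t = s) with hG
  have hGadj : ∀ s t, G.Adj s t ↔ s ≠ t ∧ (P t = s ∨ P s = t) := by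
    intro s t; rw [hG, SimpleGraph.fromRel_adj]
  have hadj : ∀ t, t ≠ r₀ → G.Adj t (P t) := by
    intro t ht
    have h1 := H1 t ht
    rw [hGadj]
    refine ⟨fun hc => ?_, Or.inr rfl⟩
    · rw [← hc] at h1; omega
  have claimG : ∀ (a b : ι) (w : G.Walk a b), w.IsPath → P a ∉ w.support →
      a = b ∨ h a < h b := by
    intro a b w
    induction w with
    | nil => intro _ _; exact Or.inl rfl
    | @cons a' c' b' had w' ih =>
      intro hp hns
      rw [SimpleGraph.Walk.cons_isPath_iff] at hp
      rw [SimpleGraph.Walk.support_cons] at hns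
      have hnotc : P a' ≠ c' := by
        intro hc
        exact hns (List.mem_cons_of_mem _ (hc ▸ w'.start_mem_support))
      have hPc : P c' = a' := by
        rcases (hGadj a' c').1 had with ⟨_, hca | hac⟩
        · exact hca
        · exact absurd hac hnotc
      have hcne : c' ≠ r₀ := fun hc => ((hGadj a' c').1 had).1 (by rw [← hPc, hc, H2])
      have hlt : h a' < h c' := hPc ▸ H1 c' hcne
      have := ih hp.1 (by rw [hPc]; exact hp.2)
      rcases this with rfl | hlt2
      · exact Or.inr hlt
      · exact Or.inr (hlt.trans hlt2)
  constructor
  · -- connected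
    have reach : ∀ n t, h t ≤ n → G.Reachable t r₀ := by
      intro n
      induction n with
      | zero =>
        intro t ht
        by_cases hr : t = r₀
        · exact hr ▸ SimpleGraph.Reachable.refl _
        · exact absurd (H1 t hr) (by omega)
      | succ n ih =>
        intro t ht
        by_cases hr : t = r₀
        · exact hr ▸ SimpleGraph.Reachable.refl _
        · exact (hadj t hr).reachable.trans (ih (P t) (by have := H1 t hr; omega))
    rw [SimpleGraph.connected_iff]
    exact ⟨fun u v => (reach (h u) u le_rfl).trans (reach (h v) v le_rfl).symm, ⟨r₀⟩⟩
  · -- acyclic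
    intro v c hc
    cases c with
    | nil => simp [SimpleGraph.Walk.isCycle_def] at hc
    | @cons _ x _ h1 w =>
      rw [SimpleGraph.Walk.cons_isCycle_iff] at hc
      obtain ⟨hw, hne⟩ := hc
      have hvx : v ≠ x := h1.ne
      obtain ⟨y, h2, w2, hwr⟩ := SimpleGraph.Walk.exists_eq_cons_of_ne hvx w.reverse
      have hwrp := hw.reverse
      rw [hwr, SimpleGraph.Walk.cons_isPath_iff] at hwrp
      obtain ⟨hw2, hvs⟩ := hwrp
      have hsy : s(v, y) ∈ w.edges := by
        have : s(v, y) ∈ w.reverse.edges := by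
          rw [hwr]; exact List.mem_cons_self
        rwa [SimpleGraph.Walk.edges_reverse, List.mem_reverse] at this
      have hxy : x ≠ y := by rintro rfl; exact hne hsy
      have hvs' : v ∉ w2.reverse.support := by
        rw [SimpleGraph.Walk.support_reverse, List.mem_reverse]; exact hvs
      rcases (hGadj v x).1 h1 with ⟨_, hx1 | hx2⟩
      · rcases (hGadj v y).1 h2 with ⟨hvy, hy1 | hy2⟩
        · have c1 := claimG y x w2 hw2 (by rw [hy1]; exact hvs)
          have c2 := claimG x y w2.reverse hw2.reverse (by rw [hx1]; exact hvs')
          rcases c1 with rfl | l1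
          · exact hxy rfl
          · rcases c2 with rfl | l2
            · exact hxy rfl
            · omega
        · have c2 := claimG x y w2.reverse hw2.reverse (by rw [hx1]; exact hvs')
          have hxr : x ≠ r₀ := fun hr => hvx (by rw [← hx1, hr, H2])
          have l3 : h v < h x := hx1 ▸ H1 x hxr
          have hvr : v ≠ r₀ := fun hr => hvy (by rw [← hy2, hr, H2])
          have l4 : h y < h v := hy2 ▸ H1 v hvr
          rcases c2 with rfl | l5
          · exact hxy rfl
          · omega
      · rcases (hGadj v y).1 h2 with ⟨hvy, hy1 | hy2⟩
        · have c1 := claimG y x w2 hw2 (by rw [hy1]; exact hvs)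
          have hyr : y ≠ r₀ := fun hr => hvy (by rw [← hy1, hr, H2])
          have l3 : h v < h y := hy1 ▸ H1 y hyr
          have hvr : v ≠ r₀ := fun hr => hvx (by rw [← hx2, hr, H2])
          have l4 : h x < h v := hx2 ▸ H1 v hvr
          rcases c1 with rfl | l5
          · exact hxy rfl
          · omega
        · exact hxy (hx2.symm.trans hy2)

/-- The heap parent of an index. -/
def parF {n : ℕ} (i : Fin n) : Fin n :=
  ⟨(i.1 - 1) / 2, lt_of_le_of_lt (le_trans (Nat.div_le_self _ _) (Nat.sub_le _ _)) i.2⟩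

lemma sym2_exists {α : Type} (e : Sym2 α) : ∃ p : α × α, e = s(p.1, p.2) := by
  induction e using Sym2.ind with | _ x y => exact ⟨(x, y), rfl⟩

/-- A choice of ordered endpoints of an unordered pair. -/
noncomputable def epr {α : Type} (e : Sym2 α) : α × α := Classical.choose (sym2_exists e)

lemma epr_spec {α : Type} (e : Sym2 α) : e = s((epr e).1, (epr e).2) :=
  Classical.choose_spec (sym2_exists e)

/-- The index type of the tree decomposition: node bags, edge bags, clause bags. -/
abbrev ιT (r k : ℕ) : Type := Fin (2 ^ (r + 1) - 1) ⊕ Fin (2 ^ (r + 1) - 1) ⊕ (CT r k).edgeSet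

/-- Parent function on decomposition nodes. -/
noncomputable def PP (r k : ℕ) : ιT r k → ιT r k
  | .inl i => if i.1 = 0 then .inl i else .inr (.inl i)
  | .inr (.inl j) => .inl (parF j)
  | .inr (.inr e) =>
      if (epr e.1).1.1 = (epr e.1).2.1 then .inl (epr e.1).1.1
      else .inr (.inl (max (epr e.1).1.1 (epr e.1).2.1))

/-- Rank function on decomposition nodes. -/
def hh (r k : ℕ) : ιT r k → ℕ
  | .inl i => 2 * i.1 + 2
  | .inr (.inl j) => if j.1 = 0 then 3 else 2 * j.1 + 1
  | .inr (.inr _) => 2 * (2 ^ (r + 1) - 1) + 4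

instance instDecEqCNFVar {V : Type} [DecidableEq V] (G : SimpleGraph V) :
    DecidableEq (CNFVar G) :=
  inferInstanceAs (DecidableEq (V ⊕ G.edgeSet))

attribute [reducible] CNFVar

/-- The bags of the decomposition. -/
noncomputable def bagF (r k : ℕ) : ιT r k → Finset (CNFVar (CT r k))
  | .inl i => Finset.univ.image (fun a : Fin k => (Sum.inl (i, a) : CNFVar (CT r k)))
  | .inr (.inl j) =>
      Finset.univ.image (fun a : Fin k => (Sum.inl (j, a) : CNFVar (CT r k))) ∪
      Finset.univ.image (fun a : Fin k => (Sum.inl (parF j, a) : CNFVar (CT r k)))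
  | .inr (.inr e) => {Sum.inr e, Sum.inl (epr e.1).1, Sum.inl (epr e.1).2}

lemma treeGraph_parent {r : ℕ} {a b : Fin (2 ^ (r + 1) - 1)} (h : (treeGraph r).Adj a b) :
    (a < b ∧ parF b = a) ∨ (b < a ∧ parF a = b) := by
  rw [treeGraph, SimpleGraph.fromRel_adj] at h
  obtain ⟨hne, hd⟩ := h
  have hne' : a.1 ≠ b.1 := fun hc => hne (Fin.ext hc)
  rcases hd with (h1 | h1) | (h1 | h1)
  · exact Or.inl ⟨by rw [Fin.lt_def]; omega, Fin.ext (show (b.1 - 1) / 2 = a.1 by omega)⟩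
  · exact Or.inl ⟨by rw [Fin.lt_def]; omega, Fin.ext (show (b.1 - 1) / 2 = a.1 by omega)⟩
  · exact Or.inr ⟨by rw [Fin.lt_def]; omega, Fin.ext (show (a.1 - 1) / 2 = b.1 by omega)⟩
  · exact Or.inr ⟨by rw [Fin.lt_def]; omega, Fin.ext (show (a.1 - 1) / 2 = b.1 by omega)⟩

lemma induce_singleton_connected {ι : Type} (T : SimpleGraph ι) (t₀ : ι) :
    (T.induce {t₀}).Connected := by
  rw [SimpleGraph.connected_iff]
  constructor
  · intro a b
    have : a = b := Subtype.ext (a.2.trans b.2.symm)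
    exact this ▸ SimpleGraph.Reachable.refl _
  · exact ⟨⟨t₀, rfl⟩⟩

/-- For every `r ≥ 0` and `k ≥ 2`, the treewidth of the primal graph of the CNF
`F_{r,k} = CNF(CT_{r,k})` is at most `2k - 1`. -/
theorem stmt1 (r k : ℕ) (hk : 2 ≤ k) :
    TreewidthLE (primalGraph (CT r k)) (2 * k - 1) := by
  classical
  have hN : 1 ≤ 2 ^ (r + 1) - 1 := by
    have : 2 ^ 1 ≤ 2 ^ (r + 1) := Nat.pow_le_pow_right (by norm_num) (by omega)
    omega
  set T : SimpleGraph (ιT r k) := SimpleGraph.fromRel (fun s t => PP r k t = s) with hT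
  have Tadj : ∀ s t : ιT r k, T.Adj s t ↔ s ≠ t ∧ (PP r k t = s ∨ PP r k s = t) := by
    intro s t; rw [hT, SimpleGraph.fromRel_adj]
  -- node–edge adjacency in T
  have nodeEdge : ∀ (i j : Fin (2 ^ (r + 1) - 1)), i = j ∨ i = parF j →
      T.Adj (Sum.inl i) (Sum.inr (Sum.inl j)) := by
    intro i j hij
    rw [Tadj]
    refine ⟨by simp, ?_⟩
    rcases hij with rfl | rfl
    · by_cases h0 : i.1 = 0
      · left
        show Sum.inl (parF i) = (Sum.inl i : ιT r k)
        have : parF i = i := Fin.ext (show (i.1 - 1) / 2 = i.1 by omega)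
        rw [this]
      · right
        show PP r k (Sum.inl i) = Sum.inr (Sum.inl i)
        simp [PP, h0]
    · left; rfl
  refine ⟨ιT r k, T, bagF r k, ?_, ?_, ?_, ?_, ?_⟩
  · -- IsTree
    rw [hT]
    apply parent_isTree (PP r k) (hh r k) (Sum.inl ⟨0, hN⟩)
    · intro t ht
      rcases t with i | j | e
      · have hi : i.1 ≠ 0 := by
          intro hc
          exact ht (by rw [show i = (⟨0, hN⟩ : Fin _) from Fin.ext hc])
        simp only [PP, hh, if_neg hi]
        omega
      · have hpj : (parF j).1 = (j.1 - 1) / 2 := rfl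
        simp only [PP, hh, hpj]
        split <;> omega
      · have h1 := ((epr e.1).1.1).isLt
        have h3 := (max (epr e.1).1.1 (epr e.1).2.1).isLt
        by_cases hcl : (epr e.1).1.1 = (epr e.1).2.1
        · simp only [PP, if_pos hcl, hh]; omega
        · simp only [PP, if_neg hcl, hh]
          split <;> omega
    · simp [PP]
  · -- union
    intro v
    rcases v with ⟨i, a⟩ | e
    · exact ⟨Sum.inl i, Finset.mem_image_of_mem _ (Finset.mem_univ a)⟩
    · exact ⟨Sum.inr (Sum.inr e), by simp [bagF]⟩
  · -- containment
    intro u v huv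
    rw [primalGraph, SimpleGraph.fromRel_adj] at huv
    obtain ⟨hne, hd⟩ := huv
    have key : ∀ (e : (CT r k).edgeSet) (x : CNFVar (CT r k)),
        inClause (CT r k) e x → x ∈ bagF r k (Sum.inr (Sum.inr e)) := by
      intro e x hx
      rcases hx with rfl | ⟨u', rfl, hu'⟩
      · simp [bagF]
      · rw [epr_spec e.1, Sym2.mem_iff] at hu'
        rcases hu' with rfl | rfl <;> simp [bagF]
    rcases hd with ⟨e, hx, hy⟩ | ⟨e, hy, hx⟩
    · exact ⟨_, key e u hx, key e v hy⟩
    · exact ⟨_, key e u hx, key e v hy⟩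
  · -- connectedness
    intro v
    rcases v with ⟨i, a⟩ | e
    · -- vertex variable
      have hub : (Sum.inl (i, a) : CNFVar (CT r k)) ∈ bagF r k (Sum.inl i) :=
        Finset.mem_image_of_mem _ (Finset.mem_univ a)
      have main : ∀ (t : ιT r k) (ht : (Sum.inl (i, a) : CNFVar (CT r k)) ∈ bagF r k t),
          (T.induce {t | (Sum.inl (i, a) : CNFVar (CT r k)) ∈ bagF r k t}).Reachable
            ⟨t, ht⟩ ⟨Sum.inl i, hub⟩ := by
        intro t ht
        rcases t with j | j | e
        · -- node bag
          have hji : j = i := by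
            simp only [bagF, Finset.mem_image] at ht
            obtain ⟨a', -, ha'⟩ := ht
            have := (Sum.inl.inj ha')
            exact (Prod.mk.injEq _ _ _ _ ▸ this).1
          subst hji
          exact SimpleGraph.Reachable.refl _
        · -- edge bag
          have hij : i = j ∨ i = parF j := by
            simp only [bagF, Finset.mem_union, Finset.mem_image] at ht
            rcases ht with ⟨a', -, ha'⟩ | ⟨a', -, ha'⟩
            · exact Or.inl ((Prod.mk.injEq _ _ _ _ ▸ (Sum.inl.inj ha')).1).symm
            · exact Or.inr ((Prod.mk.injEq _ _ _ _ ▸ (Sum.inl.inj ha')).1).symm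
          have hadj := nodeEdge i j hij
          exact (SimpleGraph.Adj.reachable (show (T.induce _).Adj ⟨_, ht⟩ ⟨Sum.inl i, hub⟩
            from hadj.symm))
        · -- clause bag
          have hmem : (i, a) = (epr e.1).1 ∨ (i, a) = (epr e.1).2 := by
            simp only [bagF, Finset.mem_insert, Finset.mem_singleton] at ht
            rcases ht with h | h | h
            · exact absurd h (by simp)
            · exact Or.inl (Sum.inl.inj h)
            · exact Or.inr (Sum.inl.inj h)
          by_cases hcl : (epr e.1).1.1 = (epr e.1).2.1
          · -- same clique: parent is node i
            have hi1 : (epr e.1).1.1 = i := by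
              rcases hmem with h | h
              · exact (congrArg Prod.fst h).symm
              · rw [hcl]; exact (congrArg Prod.fst h).symm
            have hPl : PP r k (Sum.inr (Sum.inr e)) = Sum.inl i := by
              simp only [PP]
              rw [if_pos hcl, hi1]
            have hadj : T.Adj (Sum.inr (Sum.inr e)) (Sum.inl i) := by
              rw [Tadj]; exact ⟨by simp, Or.inr hPl⟩
            exact SimpleGraph.Adj.reachable
              (show (T.induce _).Adj ⟨_, ht⟩ ⟨Sum.inl i, hub⟩ from hadj)
          · -- different cliques
            have hAdj12 : (CT r k).Adj (epr e.1).1 (epr e.1).2 := by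
              rw [← SimpleGraph.mem_edgeSet, ← epr_spec e.1]
              exact e.2
            have htA : (treeGraph r).Adj (epr e.1).1.1 (epr e.1).2.1 := by
              simp only [CT, SimpleGraph.fromRel_adj] at hAdj12
              rcases hAdj12.2 with (h | h) | (h | h)
              · exact absurd h hcl
              · exact h
              · exact absurd h.symm hcl
              · exact h.symm
            have hiC : i = (epr e.1).1.1 ∨ i = (epr e.1).2.1 := by
              rcases hmem with h | h
              · exact Or.inl (congrArg Prod.fst h)
              · exact Or.inr (congrArg Prod.fst h)
            rcases treeGraph_parent htA with ⟨hlt, hpar⟩ | ⟨hlt, hpar⟩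
            · -- child is (epr e.1).2.1
              set c := (epr e.1).2.1 with hc
              have hmax : max (epr e.1).1.1 (epr e.1).2.1 = c := max_eq_right hlt.le
              have hPl : PP r k (Sum.inr (Sum.inr e)) = Sum.inr (Sum.inl c) := by
                simp only [PP, if_neg hcl, hmax]; exact if_neg hcl
              have hin : (Sum.inl (i, a) : CNFVar (CT r k)) ∈ bagF r k (Sum.inr (Sum.inl c)) := by
                simp only [bagF, Finset.mem_union, Finset.mem_image]
                rcases hmem with h | h
                · right
                  exact ⟨a, Finset.mem_univ a,
                    by rw [hpar, show (epr e.1).1.1 = i from (congrArg Prod.fst h).symm]⟩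
                · left
                  exact ⟨a, Finset.mem_univ a,
                    by rw [show c = i from (congrArg Prod.fst h).symm]⟩
              have hadj1 : T.Adj (Sum.inr (Sum.inr e)) (Sum.inr (Sum.inl c)) := by
                rw [Tadj]; exact ⟨by simp, Or.inr hPl⟩
              have hadj2 : T.Adj (Sum.inl i) (Sum.inr (Sum.inl c)) := by
                apply nodeEdge
                rcases hiC with h | h
                · exact Or.inr (by rw [h, ← hpar])
                · exact Or.inl h
              refine (SimpleGraph.Adj.reachable
                (show (T.induce _).Adj ⟨_, ht⟩ ⟨Sum.inr (Sum.inl c), hin⟩ from hadj1)).trans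
                (SimpleGraph.Adj.reachable
                (show (T.induce _).Adj ⟨Sum.inr (Sum.inl c), hin⟩ ⟨Sum.inl i, hub⟩
                  from hadj2.symm))
            · -- child is (epr e.1).1.1
              set c := (epr e.1).1.1 with hc
              have hmax : max (epr e.1).1.1 (epr e.1).2.1 = c := max_eq_left hlt.le
              have hPl : PP r k (Sum.inr (Sum.inr e)) = Sum.inr (Sum.inl c) := by
                simp only [PP, if_neg hcl, hmax]; exact if_neg hcl
              have hin : (Sum.inl (i, a) : CNFVar (CT r k)) ∈ bagF r k (Sum.inr (Sum.inl c)) := by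
                simp only [bagF, Finset.mem_union, Finset.mem_image]
                rcases hmem with h | h
                · left
                  exact ⟨a, Finset.mem_univ a,
                    by rw [show c = i from (congrArg Prod.fst h).symm]⟩
                · right
                  exact ⟨a, Finset.mem_univ a,
                    by rw [hpar, show (epr e.1).2.1 = i from (congrArg Prod.fst h).symm]⟩
              have hadj1 : T.Adj (Sum.inr (Sum.inr e)) (Sum.inr (Sum.inl c)) := by
                rw [Tadj]; exact ⟨by simp, Or.inr hPl⟩
              have hadj2 : T.Adj (Sum.inl i) (Sum.inr (Sum.inl c)) := by
                apply nodeEdge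
                rcases hiC with h | h
                · exact Or.inl h
                · exact Or.inr (by rw [h, ← hpar])
              refine (SimpleGraph.Adj.reachable
                (show (T.induce _).Adj ⟨_, ht⟩ ⟨Sum.inr (Sum.inl c), hin⟩ from hadj1)).trans
                (SimpleGraph.Adj.reachable
                (show (T.induce _).Adj ⟨Sum.inr (Sum.inl c), hin⟩ ⟨Sum.inl i, hub⟩
                  from hadj2.symm))
      rw [SimpleGraph.connected_iff]
      constructor
      · intro t1 t2
        exact (main t1.1 t1.2).trans (main t2.1 t2.2).symm
      · exact ⟨⟨Sum.inl i, hub⟩⟩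
    · -- edge variable
      have hset : {t : ιT r k | (Sum.inr e : CNFVar (CT r k)) ∈ bagF r k t} =
          {Sum.inr (Sum.inr e)} := by
        ext t
        simp only [Set.mem_setOf_eq, Set.mem_singleton_iff]
        constructor
        · intro ht
          rcases t with j | j | e'
          · exfalso; simp [bagF] at ht
          · exfalso; simp [bagF] at ht
          · simp only [bagF, Finset.mem_insert, Finset.mem_singleton] at ht
            rcases ht with h | h | h
            · rw [Sum.inr.inj h]
            · exact absurd h (by simp)
            · exact absurd h (by simp)
        · rintro rfl
          simp [bagF]
      rw [hset]
      exact induce_singleton_connected T _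
  · -- card bound
    intro t
    have h2k : 2 * k - 1 + 1 = 2 * k := by omega
    rw [h2k]
    rcases t with i | j | e
    · refine le_trans Finset.card_image_le ?_
      simp only [Finset.card_univ, Fintype.card_fin]
      omega
    · refine le_trans (Finset.card_union_le _ _) ?_
      have l1 := Finset.card_image_le
        (f := fun a : Fin k => (Sum.inl (j, a) : CNFVar (CT r k))) (s := Finset.univ)
      have l2 := Finset.card_image_le
        (f := fun a : Fin k => (Sum.inl (parF j, a) : CNFVar (CT r k))) (s := Finset.univ)
      simp only [Finset.card_univ, Fintype.card_fin] at l1 l2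
      show _ ≤ 2 * k
      calc _ ≤ k + k := Nat.add_le_add l1 l2
        _ = 2 * k := by omega
    · show (bagF r k (Sum.inr (Sum.inr e))).card ≤ 2 * k
      refine le_trans (le_trans (Finset.card_insert_le _ _) ?_) (show 3 ≤ 2 * k by omega)
      exact Nat.succ_le_succ (le_trans (Finset.card_insert_le _ _)
        (Nat.succ_le_succ (Finset.card_singleton _).le))
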